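/- arXiv:1408.1439 — 4 statements merged into one kernel-verified Lean document; each statement's English description precedes it below -/
import Mathlib

section
/- If a sequence of Riemann integrable functions f_n : [a,b] → ℝ is uniformly bounded by a constant C (|f_n(x)| < C for all x and n), converges pointwise to a Riemann integrable function f : [a,b] → ℝ, then the integrals ∫_a^b f_n converge to ∫_a^b f. -/
open MeasureTheory Filter Set

/-- Arzelà's bounded convergence theorem: if Riemann integrable functions `f n` on `[a,b]`
are uniformly bounded by `C` and converge pointwise to an integrable `f`, then the
integrals converge to the integral of `f`. -/
theorem arzela_bounded_convergence
    (a b : ℝ) (hab : a ≤ b) (f : ℕ → ℝ → ℝ) (g : ℝ → ℝ)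
    (hint : ∀ n, IntervalIntegrable (f n) volume a b)
    (hgint : IntervalIntegrable g volume a b)
    (C : ℝ) (hbd : ∀ n, ∀ x ∈ Icc a b, |f n x| < C)
    (hptwise : ∀ x ∈ Icc a b, Tendsto (fun n => f n x) atTop (nhds (g x))) :
    Tendsto (fun n => ∫ x in a..b, f n x) atTop (nhds (∫ x in a..b, g x)) := by
  have hsub : uIoc a b ⊆ Icc a b := by
    rw [uIoc_of_le hab]; exact Ioc_subset_Icc_self
  refine intervalIntegral.tendsto_integral_filter_of_dominated_convergence (fun _ => C)
    (Eventually.of_forall fun n => (hint n).def'.aestronglyMeasurable)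
    (Eventually.of_forall fun n => Eventually.of_forall fun x hx => ?_)
    intervalIntegrable_const
    (Eventually.of_forall fun x hx => hptwise x (hsub hx))
  rw [Real.norm_eq_abs]
  exact (hbd n x (hsub hx)).le
end

section
/- If f_n : [0,1] → [0,1] is a sequence of Riemann integrable functions converging pointwise to the zero function, then ∫_0^1 f_n → 0. -/
open MeasureTheory Filter Set

/-- Reduced Arzelà theorem: if `f n : [0,1] → [0,1]` are Riemann integrable and converge
pointwise to zero on `[0,1]`, then their integrals tend to zero. -/
theorem arzela_unit_interval
    (f : ℕ → ℝ → ℝ)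
    (hmaps : ∀ n, ∀ x ∈ Icc (0:ℝ) 1, f n x ∈ Icc (0:ℝ) 1)
    (hint : ∀ n, IntervalIntegrable (f n) volume 0 1)
    (hptwise : ∀ x ∈ Icc (0:ℝ) 1, Tendsto (fun n => f n x) atTop (nhds 0)) :
    Tendsto (fun n => ∫ x in (0:ℝ)..1, f n x) atTop (nhds 0) := by
  have huIoc : Set.uIoc (0:ℝ) 1 = Ioc (0:ℝ) 1 := uIoc_of_le (by norm_num)
  have h := intervalIntegral.tendsto_integral_filter_of_dominated_convergence
    (μ := volume) (a := (0:ℝ)) (b := 1) (F := f) (f := fun _ => (0:ℝ))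
    (bound := fun _ => (1:ℝ))
    (Filter.Eventually.of_forall fun n => by
      rw [huIoc]; exact (hint n).aestronglyMeasurable)
    (Filter.Eventually.of_forall fun n =>
      Filter.Eventually.of_forall fun x hx => by
        have hx' : x ∈ Icc (0:ℝ) 1 := by
          rw [huIoc] at hx; exact Ioc_subset_Icc_self hx
        have := hmaps n x hx'
        simp only [Real.norm_eq_abs, abs_le]
        constructor <;> linarith [this.1, this.2])
    intervalIntegrable_const
    (Filter.Eventually.of_forall fun x hx => by
      have hx' : x ∈ Icc (0:ℝ) 1 := by
        rw [huIoc] at hx; exact Ioc_subset_Icc_self hx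
      exact hptwise x hx')
  simpa using h
end

section
/- Let {V_n} be a nested decreasing sequence of open subsets of [0,1], each containing a finite union of open intervals of total length at least ε > 0. Then the intersection ⋂_{n=1}^∞ V_n is nonempty. -/
open MeasureTheory Filter Set

/-- Theorem 3 of the paper: a nested decreasing sequence of open subsets of `[0,1]`, each
containing a finite union of open intervals of total length at least `ε > 0`, has
nonempty intersection. -/
theorem nested_open_sets_nonempty_inter
    (V : ℕ → Set ℝ) (hopen : ∀ n, IsOpen (V n)) (hsub : ∀ n, V n ⊆ Icc (0:ℝ) 1)
    (hanti : ∀ n, V (n + 1) ⊆ V n)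
    (ε : ℝ) (hε : 0 < ε)
    (hlen : ∀ n, ∃ s : Finset (ℝ × ℝ),
      (⋃ p ∈ s, Ioo p.1 p.2) ⊆ V n ∧
      ENNReal.ofReal ε ≤ volume (⋃ p ∈ s, Ioo p.1 p.2)) :
    (⋂ n, V n).Nonempty := by
  have hmeas : ∀ n, ENNReal.ofReal ε ≤ volume (V n) := by
    intro n
    obtain ⟨s, hsV, hsvol⟩ := hlen n
    exact hsvol.trans (measure_mono hsV)
  have hfin : volume (V 0) ≠ ⊤ := by
    refine ne_top_of_le_ne_top ?_ (measure_mono (hsub 0))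
    simp [Real.volume_Icc]
  have hanti' : Antitone V := antitone_nat_of_succ_le hanti
  have hiInter : volume (⋂ n, V n) = ⨅ n, volume (V n) :=
    hanti'.measure_iInter (fun n => (hopen n).measurableSet.nullMeasurableSet)
      ⟨0, hfin⟩
  have hpos : 0 < volume (⋂ n, V n) := by
    rw [hiInter]
    refine lt_of_lt_of_le ?_ (le_iInf hmeas)
    simpa using hε
  exact nonempty_of_measure_ne_zero hpos.ne'
end

section
/- Let f_n : [0,1] → [0,1] be Riemann integrable functions and suppose there exist ε > 0 and sets U_n ⊆ [0,1], each a finite union of open intervals of total length at least ε, with f_n > ε on U_n. Then there exists a point x ∈ [0,1] with f_n(x) > ε for infinitely many n; in particular f_n does not converge pointwise to 0. -/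
open MeasureTheory Filter Set

/-- Combining Theorem 3 with the limsup construction: if each `f n` exceeds `ε` on a
finite union `U n` of open intervals of total length at least `ε`, then some point lies
in infinitely many of the sets where `f n > ε`; in particular `f n` does not converge
pointwise to `0`. -/
theorem exists_point_of_nonconvergence
    (f : ℕ → ℝ → ℝ)
    (hmaps : ∀ n, ∀ x ∈ Icc (0:ℝ) 1, f n x ∈ Icc (0:ℝ) 1)
    (hint : ∀ n, IntervalIntegrable (f n) volume 0 1)
    (ε : ℝ) (hε : 0 < ε)
    (U : ℕ → Set ℝ) (hUsub : ∀ n, U n ⊆ Icc (0:ℝ) 1)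
    (hUfin : ∀ n, ∃ s : Finset (ℝ × ℝ), U n = (⋃ p ∈ s, Ioo p.1 p.2) ∧
      ENNReal.ofReal ε ≤ volume (U n))
    (hf : ∀ n, ∀ x ∈ U n, ε < f n x) :
    ∃ x ∈ Icc (0:ℝ) 1, {n : ℕ | ε < f n x}.Infinite ∧
      ¬ Tendsto (fun n => f n x) atTop (nhds 0) := by
  have hUmeas : ∀ n, MeasurableSet (U n) := by
    intro n
    obtain ⟨s, hs, -⟩ := hUfin n
    rw [hs]
    exact s.measurableSet_biUnion (fun p _ => measurableSet_Ioo)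
  set V : ℕ → Set ℝ := fun n => ⋃ k, ⋃ _ : n ≤ k, U k with hV
  have hVmeas : ∀ n, MeasurableSet (V n) :=
    fun n => MeasurableSet.iUnion fun k => MeasurableSet.iUnion fun _ => hUmeas k
  have hVsub : ∀ n, V n ⊆ Icc (0:ℝ) 1 := fun n =>
    Set.iUnion₂_subset fun k _ => hUsub k
  have hVanti : Antitone V := by
    intro m n hmn
    exact Set.iUnion₂_subset fun k hk => Set.subset_iUnion₂ (s := fun k (_ : m ≤ k) => U k) k (hmn.trans hk)
  have hVε : ∀ n, ENNReal.ofReal ε ≤ volume (V n) := by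
    intro n
    obtain ⟨s, hs, hvol⟩ := hUfin n
    exact hvol.trans (measure_mono (Set.subset_iUnion₂ (s := fun k (_ : n ≤ k) => U k) n le_rfl))
  have hfin : volume (V 0) ≠ ⊤ :=
    ((measure_mono (hVsub 0)).trans_lt isCompact_Icc.measure_lt_top).ne
  have hmeasInter : ENNReal.ofReal ε ≤ volume (⋂ n, V n) := by
    rw [hVanti.measure_iInter (fun n => (hVmeas n).nullMeasurableSet)
      ⟨0, hfin⟩]
    exact le_iInf hVε
  have hne : (⋂ n, V n).Nonempty := by
    apply nonempty_of_measure_ne_zero (μ := volume)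
    intro h0
    rw [h0] at hmeasInter
    exact absurd (le_antisymm hmeasInter (zero_le)).symm
      (by simpa using (ENNReal.ofReal_pos.mpr hε).ne')
  obtain ⟨x, hx⟩ := hne
  have hxV : ∀ n, x ∈ V n := fun n => Set.mem_iInter.mp hx n
  have hxIcc : x ∈ Icc (0:ℝ) 1 := hVsub 0 (hxV 0)
  have hinf : {n : ℕ | ε < f n x}.Infinite := by
    apply Set.infinite_of_not_bddAbove
    rintro ⟨N, hN⟩
    obtain ⟨k, hk, hxk⟩ := Set.mem_iUnion₂.mp (hxV (N + 1))
    exact absurd (hN (hf k x hxk)) (by omega)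
  refine ⟨x, hxIcc, hinf, fun htend => ?_⟩
  have hev : ∀ᶠ n in atTop, f n x < ε :=
    htend.eventually (Filter.Tendsto.eventually_lt_const hε tendsto_id) |>.mono
      (fun n hn => by simpa using hn)
  obtain ⟨n, hn1, hn2⟩ := ((Nat.frequently_atTop_iff_infinite.mpr hinf).and_eventually hev).exists
  exact absurd hn1 (not_lt.mpr hn2.le)
end
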